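/- Let (T_i, T_j) be a centered bivariate normal random vector with unit variances and correlation ρ ∈ (0,1), let α ∈ (0,1), let c = c_{α/2} be the upper α/2 quantile of the standard normal distribution, and set R_i = {|T_i| > c}, R_j = {|T_j| > c}. Then Cov(1_{R_i}, 1_{R_j}) > 0, i.e. P(R_i ∩ R_j) > α². -/

import Mathlib

open MeasureTheory ProbabilityTheory

/-- The standard normal cumulative distribution function `Φ`. -/
noncomputable def stdCDF (x : ℝ) : ℝ :=
  ∫ t in Set.Iic x, (Real.sqrt (2 * Real.pi))⁻¹ * Real.exp (-t ^ 2 / 2)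

/-- The standard bivariate normal distribution with correlation `ρ`, as a measure on `ℝ × ℝ`
given by its density with respect to Lebesgue measure. -/
noncomputable def bivNormal (ρ : ℝ) : Measure (ℝ × ℝ) :=
  volume.withDensity fun p =>
    ENNReal.ofReal ((2 * Real.pi * Real.sqrt (1 - ρ ^ 2))⁻¹ *
      Real.exp (-(p.1 ^ 2 - 2 * ρ * p.1 * p.2 + p.2 ^ 2) / (2 * (1 - ρ ^ 2))))


open Real Set

noncomputable def phi (x : ℝ) : ℝ := (Real.sqrt (2 * Real.pi))⁻¹ * Real.exp (-x ^ 2 / 2)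

noncomputable def bivDen (ρ : ℝ) (p : ℝ × ℝ) : ℝ :=
  (2 * Real.pi * Real.sqrt (1 - ρ ^ 2))⁻¹ *
      Real.exp (-(p.1 ^ 2 - 2 * ρ * p.1 * p.2 + p.2 ^ 2) / (2 * (1 - ρ ^ 2)))

noncomputable def auxG (ρ c x : ℝ) : ℝ :=
  1 - stdCDF ((c - ρ * x) / Real.sqrt (1 - ρ ^ 2)) + stdCDF ((-c - ρ * x) / Real.sqrt (1 - ρ ^ 2))

lemma phi_pos (x : ℝ) : 0 < phi x := by
  have : 0 < Real.sqrt (2 * Real.pi) := Real.sqrt_pos.2 (by positivity)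
  exact mul_pos (inv_pos.2 this) (Real.exp_pos _)

lemma phi_cont : Continuous phi := by
  unfold phi; continuity

lemma phi_meas : Measurable phi := phi_cont.measurable

lemma phi_integrable : Integrable phi := by
  have h : Integrable (fun x : ℝ => Real.exp (-(1/2) * x ^ 2)) := integrable_exp_neg_mul_sq (by norm_num)
  have := h.const_mul (Real.sqrt (2 * Real.pi))⁻¹
  refine this.congr (Filter.Eventually.of_forall fun x => ?_)
  unfold phi; ring_nf

lemma phi_integral : ∫ x : ℝ, phi x = 1 := by
  have h : ∫ x : ℝ, Real.exp (-(1/2) * x ^ 2) = Real.sqrt (Real.pi / (1/2)) := integral_gaussian (1/2)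
  have h2 : ∫ x : ℝ, phi x = (Real.sqrt (2 * Real.pi))⁻¹ * ∫ x : ℝ, Real.exp (-(1/2) * x ^ 2) := by
    rw [← integral_const_mul]
    congr 1 with x
    unfold phi; ring_nf
  rw [h2, h]
  have : Real.pi / (1/2) = 2 * Real.pi := by ring
  rw [this]
  exact inv_mul_cancel₀ (ne_of_gt (Real.sqrt_pos.2 (by positivity)))

lemma stdCDF_eq (x : ℝ) : stdCDF x = ∫ t in Set.Iic x, phi t := rfl

lemma phi_even (x : ℝ) : phi (-x) = phi x := by unfold phi; ring_nf

lemma stdCDF_add_Ioi (x : ℝ) : stdCDF x + ∫ t in Set.Ioi x, phi t = 1 := by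
  rw [stdCDF_eq, ← phi_integral]
  exact intervalIntegral.integral_Iic_add_Ioi phi_integrable.integrableOn phi_integrable.integrableOn

lemma stdCDF_neg (x : ℝ) : stdCDF (-x) = 1 - stdCDF x := by
  have h2 : ∫ t in Set.Iic (-x), phi t = ∫ t in Set.Ioi x, phi t := by
    rw [← integral_comp_neg_Ioi]
    exact (setIntegral_congr_fun measurableSet_Ioi fun t _ => phi_even t)
  rw [stdCDF_eq, h2, eq_sub_iff_add_eq, add_comm]
  exact stdCDF_add_Ioi x

lemma stdCDF_mono : Monotone stdCDF := by
  intro a b hab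
  rw [stdCDF_eq, stdCDF_eq]
  exact setIntegral_mono_set phi_integrable.integrableOn
    (Filter.Eventually.of_forall fun t => (phi_pos t).le)
    (HasSubset.Subset.eventuallyLE (Iic_subset_Iic.2 hab))

lemma stdCDF_nonneg (x : ℝ) : 0 ≤ stdCDF x :=
  setIntegral_nonneg measurableSet_Iic fun t _ => (phi_pos t).le

lemma stdCDF_le_one (x : ℝ) : stdCDF x ≤ 1 := by
  have h := stdCDF_add_Ioi x
  have h0 : 0 ≤ ∫ t in Set.Ioi x, phi t :=
    setIntegral_nonneg measurableSet_Ioi fun t _ => (phi_pos t).le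
  linarith

lemma stdCDF_zero : stdCDF 0 = 1 / 2 := by
  have := stdCDF_neg 0
  simp only [neg_zero] at this; linarith

lemma Ioi_integral_eq (x : ℝ) : ∫ t in Set.Ioi x, phi t = 1 - stdCDF x := by
  have := stdCDF_add_Ioi x; linarith

lemma stdCDF_sub (a b : ℝ) : stdCDF b - stdCDF a = ∫ t in a..b, phi t := by
  rw [stdCDF_eq, stdCDF_eq]
  exact intervalIntegral.integral_Iic_sub_Iic phi_integrable.integrableOn phi_integrable.integrableOn

lemma integral_comp_affine (G : ℝ → ℝ) {s : ℝ} (hs : 0 < s) (m : ℝ) :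
    ∫ z : ℝ, G (s * z + m) = s⁻¹ * ∫ y, G y := by
  have h1 : ∫ z : ℝ, (fun w => G (w + m)) (s * z) = |s⁻¹| • ∫ w, G (w + m) :=
    Measure.integral_comp_mul_left (fun w => G (w + m)) s
  have h2 : ∫ w : ℝ, G (w + m) = ∫ y, G y := integral_add_right_eq_self G m
  simp only [h2, abs_of_pos (inv_pos.2 hs), smul_eq_mul] at h1
  exact h1

lemma setIntegral_comp_affine (G : ℝ → ℝ) {s : ℝ} (hs : 0 < s) (m : ℝ) {A : Set ℝ}
    (hA : MeasurableSet A) :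
    ∫ y in A, G y = s * ∫ z in ((fun z => s * z + m) ⁻¹' A), G (s * z + m) := by
  have hA' : MeasurableSet ((fun z => s * z + m) ⁻¹' A) :=
    (measurable_id.const_mul s |>.add_const m) hA
  rw [← integral_indicator hA, ← integral_indicator hA']
  have : ∀ z, A.indicator G (s * z + m) = ((fun z => s * z + m) ⁻¹' A).indicator (fun z => G (s * z + m)) z :=
    fun z => rfl
  calc ∫ y, A.indicator G y = s * ∫ z, A.indicator G (s * z + m) := by
        rw [integral_comp_affine (A.indicator G) hs m]
        field_simp
    _ = s * ∫ z, ((fun z => s * z + m) ⁻¹' A).indicator (fun z => G (s * z + m)) z := by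
        rfl

lemma gauss_affine_integrable {s : ℝ} (hs : 0 < s) (m : ℝ) :
    Integrable (fun y => s⁻¹ * phi ((y - m) / s)) := by
  have h1 : Integrable (fun y : ℝ => phi (y / s)) := phi_integrable.comp_div (ne_of_gt hs)
  have h2 : Integrable (fun y : ℝ => phi ((y - m) / s)) := by
    have := h1.comp_sub_right m
    exact this
  exact h2.const_mul _

lemma gauss_affine_total {s : ℝ} (hs : 0 < s) (m : ℝ) :
    ∫ y, s⁻¹ * phi ((y - m) / s) = 1 := by
  have h := setIntegral_comp_affine (fun y => s⁻¹ * phi ((y - m) / s)) hs m (MeasurableSet.univ (α := ℝ))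
  simp only [Set.preimage_univ, MeasureTheory.setIntegral_univ] at h
  rw [h]
  have : ∀ z : ℝ, s⁻¹ * phi ((s * z + m - m) / s) = s⁻¹ * phi z := by
    intro z; congr 2; field_simp; ring
  rw [integral_congr_ae (g := fun z => s⁻¹ * phi z) (Filter.Eventually.of_forall this),
    integral_const_mul, phi_integral]
  field_simp

lemma gauss_affine_Iic {s : ℝ} (hs : 0 < s) (m u : ℝ) :
    ∫ y in Set.Iic u, s⁻¹ * phi ((y - m) / s) = stdCDF ((u - m) / s) := by
  have hpre : (fun z => s * z + m) ⁻¹' Set.Iic u = Set.Iic ((u - m) / s) := by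
    ext z
    simp only [Set.mem_preimage, Set.mem_Iic]
    rw [le_div_iff₀ hs]
    constructor <;> intro h <;> nlinarith
  rw [setIntegral_comp_affine (fun y => s⁻¹ * phi ((y - m) / s)) hs m measurableSet_Iic, hpre,
    stdCDF_eq]
  have : ∀ z : ℝ, s⁻¹ * phi ((s * z + m - m) / s) = s⁻¹ * phi z := by
    intro z; congr 2; field_simp; ring
  rw [integral_congr_ae (g := fun z => s⁻¹ * phi z) (Filter.Eventually.of_forall fun z => this z)]
  rw [integral_const_mul]
  field_simp

lemma gauss_affine_Ioi {s : ℝ} (hs : 0 < s) (m u : ℝ) :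
    ∫ y in Set.Ioi u, s⁻¹ * phi ((y - m) / s) = 1 - stdCDF ((u - m) / s) := by
  have h := intervalIntegral.integral_Iic_add_Ioi (b := u) (μ := volume)
    (gauss_affine_integrable hs m).integrableOn (gauss_affine_integrable hs m).integrableOn
  rw [gauss_affine_total hs m, gauss_affine_Iic hs m u] at h
  linarith

lemma tailSet_eq (c : ℝ) : {y : ℝ | c < |y|} = Set.Iio (-c) ∪ Set.Ioi c := by
  ext y
  simp only [Set.mem_setOf_eq, Set.mem_union, Set.mem_Iio, Set.mem_Ioi, lt_abs, lt_neg]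
  tauto

lemma tailSet_meas (c : ℝ) : MeasurableSet {y : ℝ | c < |y|} := by
  rw [tailSet_eq]; exact measurableSet_Iio.union measurableSet_Ioi

lemma gauss_affine_tail {s c : ℝ} (hs : 0 < s) (hc : 0 ≤ c) (m : ℝ) :
    ∫ y in {y : ℝ | c < |y|}, s⁻¹ * phi ((y - m) / s)
      = 1 - stdCDF ((c - m) / s) + stdCDF ((-c - m) / s) := by
  rw [tailSet_eq]
  rw [setIntegral_union (by
      rw [Set.disjoint_left]; intro y (hy : y < -c) (hy2 : c < y); linarith)
    measurableSet_Ioi (gauss_affine_integrable hs m).integrableOn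
    (gauss_affine_integrable hs m).integrableOn]
  rw [show (∫ y in Set.Iio (-c), s⁻¹ * phi ((y - m) / s))
      = ∫ y in Set.Iic (-c), s⁻¹ * phi ((y - m) / s) from
    setIntegral_congr_set Iio_ae_eq_Iic]
  rw [gauss_affine_Iic hs m (-c), gauss_affine_Ioi hs m c]
  ring

lemma auxG_mem_Icc {ρ : ℝ} (c x : ℝ) (hc : 0 ≤ c) (hρ : ρ ∈ Set.Ioo (0:ℝ) 1) :
    auxG ρ c x ∈ Set.Icc (0:ℝ) 1 := by
  have hs : 0 < Real.sqrt (1 - ρ ^ 2) := Real.sqrt_pos.2 (by nlinarith [hρ.1, hρ.2])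
  have hab : (-c - ρ * x) / Real.sqrt (1 - ρ ^ 2) ≤ (c - ρ * x) / Real.sqrt (1 - ρ ^ 2) := by
    gcongr; linarith
  have := stdCDF_mono hab
  constructor
  · unfold auxG
    have := stdCDF_le_one ((c - ρ * x) / Real.sqrt (1 - ρ ^ 2))
    have := stdCDF_nonneg ((-c - ρ * x) / Real.sqrt (1 - ρ ^ 2))
    linarith
  · unfold auxG; linarith

lemma auxG_even {ρ : ℝ} (c x : ℝ) : auxG ρ c (-x) = auxG ρ c x := by
  unfold auxG
  have e1 : (-c - ρ * -x) / Real.sqrt (1 - ρ ^ 2) = -((c - ρ * x) / Real.sqrt (1 - ρ ^ 2)) := by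
    ring
  have e2 : (-c - ρ * x) / Real.sqrt (1 - ρ ^ 2) = -((c - ρ * -x) / Real.sqrt (1 - ρ ^ 2)) := by
    ring
  rw [e1, stdCDF_neg, e2, stdCDF_neg]
  ring

lemma auxG_strictMonoOn {ρ c : ℝ} (hρ : ρ ∈ Set.Ioo (0:ℝ) 1) (hc : 0 < c) :
    ∀ x1 x2, 0 ≤ x1 → x1 < x2 → auxG ρ c x1 < auxG ρ c x2 := by
  intro x1 x2 hx1 hx12
  set s := Real.sqrt (1 - ρ ^ 2) with hsdef
  have hs : 0 < s := Real.sqrt_pos.2 (by nlinarith [hρ.1, hρ.2])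
  set d : ℝ := 2 * c / s with hd
  have hd2 : d / 2 = c / s := by rw [hd]; ring
  set a : ℝ := (c - ρ * x2) / s with ha
  set b : ℝ := (c - ρ * x1) / s with hb
  have hab : a < b := by
    rw [ha, hb]
    apply div_lt_div_of_pos_right ?_ hs
    nlinarith [hρ.1]
  have hbd : b ≤ d / 2 := by
    rw [hb, hd2]
    gcongr
    nlinarith [hρ.1]
  have key : auxG ρ c x2 - auxG ρ c x1
      = (stdCDF b - stdCDF a) - (stdCDF (b - d) - stdCDF (a - d)) := by
    unfold auxG
    have e1 : (-c - ρ * x1) / s = b - d := by rw [hb, hd]; ring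
    have e2 : (-c - ρ * x2) / s = a - d := by rw [ha, hd]; ring
    rw [← hsdef, e1, e2]; ring
  have h1 : stdCDF b - stdCDF a = ∫ t in a..b, phi t := stdCDF_sub a b
  have h2 : stdCDF (b - d) - stdCDF (a - d) = ∫ t in a..b, phi (t - d) := by
    rw [stdCDF_sub]
    exact (intervalIntegral.integral_comp_sub_right phi d).symm
  have hpos : 0 < ∫ t in a..b, (phi t - phi (t - d)) := by
    apply intervalIntegral.intervalIntegral_pos_of_pos_on
    · exact ((phi_cont.sub (phi_cont.comp (continuous_id.sub continuous_const))).intervalIntegrable a b)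
    · intro t ht
      have htb : t < d / 2 := lt_of_lt_of_le ht.2 hbd
      have : (t - d) ^ 2 > t ^ 2 := by nlinarith [div_pos (mul_pos two_pos hc) hs]
      unfold phi
      have : Real.exp (-(t-d)^2/2) < Real.exp (-t^2/2) := by
        apply Real.exp_lt_exp.2; linarith
      have hN : 0 < (Real.sqrt (2 * Real.pi))⁻¹ := by
        exact inv_pos.2 (Real.sqrt_pos.2 (by positivity))
      nlinarith
    · exact hab
  have hsplit : ∫ t in a..b, (phi t - phi (t - d))
      = (∫ t in a..b, phi t) - ∫ t in a..b, phi (t - d) := by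
    apply intervalIntegral.integral_sub
    · exact phi_cont.intervalIntegrable a b
    · exact (phi_cont.comp (continuous_id.sub continuous_const)).intervalIntegrable a b
  rw [hsplit] at hpos
  linarith [key, h1, h2, hpos]

lemma auxG_le {ρ c : ℝ} (hρ : ρ ∈ Set.Ioo (0:ℝ) 1) (hc : 0 < c) {x : ℝ} :
    (|x| ≤ c → auxG ρ c x ≤ auxG ρ c c) ∧ (c ≤ |x| → auxG ρ c c ≤ auxG ρ c x) := by
  have heven : auxG ρ c x = auxG ρ c |x| := by
    rcases abs_choice x with h | h
    · rw [h]
    · rw [h, auxG_even]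
  constructor
  · intro h
    rw [heven]
    rcases eq_or_lt_of_le h with h' | h'
    · rw [h']
    · exact (auxG_strictMonoOn hρ hc |x| c (abs_nonneg x) h').le
  · intro h
    rw [heven]
    rcases eq_or_lt_of_le h with h' | h'
    · rw [← h']
    · exact (auxG_strictMonoOn hρ hc c |x| hc.le h').le

lemma bivDen_factor {ρ : ℝ} (hρ : ρ ∈ Set.Ioo (0:ℝ) 1) (x y : ℝ) :
    bivDen ρ (x, y)
      = phi x * ((Real.sqrt (1 - ρ ^ 2))⁻¹ * phi ((y - ρ * x) / Real.sqrt (1 - ρ ^ 2))) := by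
  unfold bivDen phi
  set s := Real.sqrt (1 - ρ ^ 2) with hsdef
  have h1ρ : (0:ℝ) < 1 - ρ ^ 2 := by nlinarith [hρ.1, hρ.2]
  have hs : 0 < s := Real.sqrt_pos.2 h1ρ
  have hsq : s ^ 2 = 1 - ρ ^ 2 := Real.sq_sqrt h1ρ.le
  have h2π : Real.sqrt (2 * Real.pi) * Real.sqrt (2 * Real.pi) = 2 * Real.pi :=
    Real.mul_self_sqrt (by positivity)
  have hexp : -(x ^ 2 - 2 * ρ * x * y + y ^ 2) / (2 * (1 - ρ ^ 2))
      = -x ^ 2 / 2 + -((y - ρ * x) / s) ^ 2 / 2 := by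
    rw [div_pow, hsq]
    field_simp
    ring
  rw [hexp, Real.exp_add]
  have hpref : (2 * Real.pi * s)⁻¹
      = (Real.sqrt (2 * Real.pi))⁻¹ * ((Real.sqrt (2 * Real.pi))⁻¹ * s⁻¹) := by
    rw [← mul_inv, ← mul_inv, ← mul_assoc, h2π]
  rw [hpref]
  ring

lemma bivDen_symm (ρ : ℝ) (x y : ℝ) : bivDen ρ (x, y) = bivDen ρ (y, x) := by
  unfold bivDen; ring_nf

lemma bivDen_pos {ρ : ℝ} (hρ : ρ ∈ Set.Ioo (0:ℝ) 1) (p : ℝ × ℝ) : 0 < bivDen ρ p := by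
  have h1ρ : (0:ℝ) < 1 - ρ ^ 2 := by nlinarith [hρ.1, hρ.2]
  have hs : 0 < Real.sqrt (1 - ρ ^ 2) := Real.sqrt_pos.2 h1ρ
  unfold bivDen
  positivity

lemma bivDen_cont (ρ : ℝ) : Continuous (bivDen ρ) := by
  unfold bivDen; fun_prop

lemma bivDen_integrable {ρ : ℝ} (hρ : ρ ∈ Set.Ioo (0:ℝ) 1) :
    Integrable (bivDen ρ) (volume : Measure (ℝ × ℝ)) := by
  have h1ρ : (0:ℝ) < 1 - ρ ^ 2 := by nlinarith [hρ.1, hρ.2]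
  have hs : 0 < Real.sqrt (1 - ρ ^ 2) := Real.sqrt_pos.2 h1ρ
  rw [MeasureTheory.Measure.volume_eq_prod]
  rw [MeasureTheory.integrable_prod_iff ((bivDen_cont ρ).aestronglyMeasurable)]
  constructor
  · refine Filter.Eventually.of_forall fun x => ?_
    have : Integrable (fun y => phi x * ((Real.sqrt (1 - ρ ^ 2))⁻¹ *
        phi ((y - ρ * x) / Real.sqrt (1 - ρ ^ 2)))) :=
      ((gauss_affine_integrable hs (ρ * x))).const_mul (phi x)
    exact this.congr (Filter.Eventually.of_forall fun y => (bivDen_factor hρ x y).symm)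
  · have : (fun x => ∫ y, ‖bivDen ρ (x, y)‖) = phi := by
      funext x
      have h1 : ∀ y, ‖bivDen ρ (x, y)‖ = phi x * ((Real.sqrt (1 - ρ ^ 2))⁻¹ *
          phi ((y - ρ * x) / Real.sqrt (1 - ρ ^ 2))) := fun y => by
        rw [Real.norm_eq_abs, abs_of_pos (bivDen_pos hρ _), bivDen_factor hρ x y]
      rw [integral_congr_ae (Filter.Eventually.of_forall h1), integral_const_mul,
        gauss_affine_total hs (ρ * x), mul_one]
    rw [this]
    exact phi_integrable

lemma s_pos {ρ : ℝ} (hρ : ρ ∈ Set.Ioo (0:ℝ) 1) : 0 < Real.sqrt (1 - ρ ^ 2) :=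
  Real.sqrt_pos.2 (by nlinarith [hρ.1, hρ.2])

lemma biv_toReal {ρ : ℝ} (hρ : ρ ∈ Set.Ioo (0:ℝ) 1) {S : Set (ℝ × ℝ)} (hS : MeasurableSet S) :
    ((bivNormal ρ) S).toReal = ∫ p in S, bivDen ρ p := by
  have h1 : (bivNormal ρ) S = ∫⁻ p in S, ENNReal.ofReal (bivDen ρ p) := by
    rw [bivNormal, withDensity_apply _ hS]; rfl
  rw [h1, ← MeasureTheory.ofReal_integral_eq_lintegral_ofReal
    ((bivDen_integrable hρ).integrableOn)
    (Filter.Eventually.of_forall fun p => (bivDen_pos hρ p).le)]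
  exact ENNReal.toReal_ofReal (setIntegral_nonneg hS fun p _ => (bivDen_pos hρ p).le)

lemma biv_prod_integral {ρ : ℝ} (hρ : ρ ∈ Set.Ioo (0:ℝ) 1) {A B : Set ℝ}
    (hA : MeasurableSet A) (hB : MeasurableSet B) :
    ∫ p in A ×ˢ B, bivDen ρ p = ∫ x in A, ∫ y in B, bivDen ρ (x, y) := by
  rw [MeasureTheory.Measure.volume_eq_prod]
  exact MeasureTheory.setIntegral_prod _ (by
    rw [← MeasureTheory.Measure.volume_eq_prod]
    exact (bivDen_integrable hρ).integrableOn)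

lemma inner_tail {ρ c : ℝ} (hρ : ρ ∈ Set.Ioo (0:ℝ) 1) (hc : 0 ≤ c) (x : ℝ) :
    ∫ y in {y : ℝ | c < |y|}, bivDen ρ (x, y) = phi x * auxG ρ c x := by
  rw [setIntegral_congr_fun (tailSet_meas c)
    (fun y _ => bivDen_factor hρ x y), integral_const_mul,
    gauss_affine_tail (s_pos hρ) hc (ρ * x)]
  rfl

lemma inner_full {ρ : ℝ} (hρ : ρ ∈ Set.Ioo (0:ℝ) 1) (x : ℝ) :
    ∫ y, bivDen ρ (x, y) = phi x := by
  rw [integral_congr_ae (Filter.Eventually.of_forall fun y => bivDen_factor hρ x y),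
    integral_const_mul, gauss_affine_total (s_pos hρ) (ρ * x), mul_one]

lemma biv_tail_univ {ρ c : ℝ} (hρ : ρ ∈ Set.Ioo (0:ℝ) 1) :
    ∫ p in {y : ℝ | c < |y|} ×ˢ (Set.univ : Set ℝ), bivDen ρ p
      = ∫ x in {y : ℝ | c < |y|}, phi x := by
  rw [biv_prod_integral hρ (tailSet_meas c) MeasurableSet.univ]
  exact setIntegral_congr_fun (tailSet_meas c) fun x _ => by
    rw [MeasureTheory.setIntegral_univ, inner_full hρ x]

lemma biv_univ_tail {ρ c : ℝ} (hρ : ρ ∈ Set.Ioo (0:ℝ) 1) (hc : 0 ≤ c) :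
    ∫ p in (Set.univ : Set ℝ) ×ˢ {y : ℝ | c < |y|}, bivDen ρ p
      = ∫ x, phi x * auxG ρ c x := by
  rw [biv_prod_integral hρ MeasurableSet.univ (tailSet_meas c), MeasureTheory.setIntegral_univ]
  exact integral_congr_ae (Filter.Eventually.of_forall fun x => inner_tail hρ hc x)

lemma biv_tail_tail {ρ c : ℝ} (hρ : ρ ∈ Set.Ioo (0:ℝ) 1) (hc : 0 ≤ c) :
    ∫ p in {y : ℝ | c < |y|} ×ˢ {y : ℝ | c < |y|}, bivDen ρ p
      = ∫ x in {y : ℝ | c < |y|}, phi x * auxG ρ c x := by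
  rw [biv_prod_integral hρ (tailSet_meas c) (tailSet_meas c)]
  exact setIntegral_congr_fun (tailSet_meas c) fun x _ => inner_tail hρ hc x

lemma biv_swap {ρ c : ℝ} (hρ : ρ ∈ Set.Ioo (0:ℝ) 1) :
    ∫ p in (Set.univ : Set ℝ) ×ˢ {y : ℝ | c < |y|}, bivDen ρ p
      = ∫ p in {y : ℝ | c < |y|} ×ˢ (Set.univ : Set ℝ), bivDen ρ p := by
  have hmp : MeasurePreserving (Prod.swap : ℝ × ℝ → ℝ × ℝ)
      (volume : Measure (ℝ × ℝ)) (volume : Measure (ℝ × ℝ)) := by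
    rw [MeasureTheory.Measure.volume_eq_prod]
    exact Measure.measurePreserving_swap
  have hemb : MeasurableEmbedding (Prod.swap : ℝ × ℝ → ℝ × ℝ) :=
    (MeasurableEquiv.prodComm (α := ℝ) (β := ℝ)).measurableEmbedding
  have key := hmp.setIntegral_preimage_emb hemb (bivDen ρ)
    ({y : ℝ | c < |y|} ×ˢ (Set.univ : Set ℝ))
  have hpre : (Prod.swap : ℝ × ℝ → ℝ × ℝ) ⁻¹' ({y : ℝ | c < |y|} ×ˢ (Set.univ : Set ℝ))
      = (Set.univ : Set ℝ) ×ˢ {y : ℝ | c < |y|} := by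
    ext p; simp [Set.mem_prod]
  rw [hpre] at key
  rw [← key]
  exact setIntegral_congr_fun (MeasurableSet.univ.prod (tailSet_meas c))
    fun p _ => (bivDen_symm ρ p.2 p.1).symm

/-- If `(Tᵢ, Tⱼ)` is standard bivariate normal with correlation
`ρ ∈ (0, 1)`, `α ∈ (0,1)`, `c = c_{α/2}` the upper `α/2` standard normal quantile, and
`Rᵢ = {|Tᵢ| > c}`, `Rⱼ = {|Tⱼ| > c}`, then `Cov(1_{Rᵢ}, 1_{Rⱼ}) > 0`, i.e.
`P(Rᵢ ∩ Rⱼ) > α²`. -/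
theorem statement5
    {Ω : Type*} [MeasurableSpace Ω] (P : Measure Ω) [IsProbabilityMeasure P]
    (Ti Tj : Ω → ℝ) (hTi : Measurable Ti) (hTj : Measurable Tj)
    (ρ : ℝ) (hρ : ρ ∈ Set.Ioo (0 : ℝ) 1)
    (hlaw : P.map (fun ω => (Ti ω, Tj ω)) = bivNormal ρ)
    (α : ℝ) (hα : α ∈ Set.Ioo (0 : ℝ) 1)
    (c : ℝ) (hc : 2 * (1 - stdCDF c) = α) :
    α ^ 2 < (P ({ω | c < |Ti ω|} ∩ {ω | c < |Tj ω|})).toReal := by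
  obtain ⟨hα0, hα1⟩ := hα
  -- c is positive
  have hc0 : 0 < c := by
    by_contra h
    push_neg at h
    have h1 : stdCDF c ≤ stdCDF 0 := stdCDF_mono h
    rw [stdCDF_zero] at h1
    linarith
  set A : Set ℝ := {y : ℝ | c < |y|} with hA
  have hAm : MeasurableSet A := tailSet_meas c
  set G : ℝ → ℝ := auxG ρ c with hG
  -- ∫_A phi = α
  have hAphi : ∫ x in A, phi x = α := by
    have h := gauss_affine_tail (s := 1) (c := c) one_pos hc0.le 0
    have h2 : ∀ y : ℝ, (1:ℝ)⁻¹ * phi ((y - 0) / 1) = phi y := by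
      intro y; norm_num
    rw [setIntegral_congr_fun hAm fun y _ => (h2 y).symm, h]
    simp only [sub_zero, div_one]
    rw [show (-c : ℝ) = -c from rfl, stdCDF_neg]
    linarith
  -- ∫ phi * G = α
  have hphiG : ∫ x, phi x * G x = α := by
    rw [hG, ← biv_univ_tail hρ hc0.le, biv_swap hρ, biv_tail_univ hρ, hAphi]
  -- the target probability equals T
  set T : ℝ := ∫ x in A, phi x * G x with hT
  have hPT : (P ({ω | c < |Ti ω|} ∩ {ω | c < |Tj ω|})).toReal = T := by
    have hset : {ω | c < |Ti ω|} ∩ {ω | c < |Tj ω|}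
        = (fun ω => (Ti ω, Tj ω)) ⁻¹' (A ×ˢ A) := by
      ext ω; simp [hA, Set.mem_prod]
    rw [hset, ← Measure.map_apply (hTi.prodMk hTj) (hAm.prod hAm), hlaw,
      biv_toReal hρ (hAm.prod hAm), biv_tail_tail hρ hc0.le]
  rw [hPT]
  -- measurability and integrability
  have hGmeas : Measurable G := by
    have h1 : Measurable stdCDF := stdCDF_mono.measurable
    have h2 : Measurable fun x : ℝ => (c - ρ * x) / Real.sqrt (1 - ρ ^ 2) := by fun_prop
    have h3 : Measurable fun x : ℝ => (-c - ρ * x) / Real.sqrt (1 - ρ ^ 2) := by fun_prop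
    exact (measurable_const.sub (h1.comp h2)).add (h1.comp h3)
  have hGbd : ∀ x, |G x - G c| ≤ 1 := by
    intro x
    have h1 := auxG_mem_Icc (ρ := ρ) c x hc0.le hρ
    have h2 := auxG_mem_Icc (ρ := ρ) c c hc0.le hρ
    rw [abs_le]
    constructor <;> [linarith [h1.1, h2.2]; linarith [h1.2, h2.1]]
  have hv : Integrable (fun x => (G x - G c) * phi x) :=
    phi_integrable.bdd_mul (c := 1) ((hGmeas.sub measurable_const).aestronglyMeasurable)
      (Filter.Eventually.of_forall fun x => hGbd x)
  have hGphi : Integrable (fun x => G x * phi x) := by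
    refine phi_integrable.bdd_mul (c := 1) (hGmeas.aestronglyMeasurable) (Filter.Eventually.of_forall fun x => ?_)
    have h1 := auxG_mem_Icc (ρ := ρ) c x hc0.le hρ
    rw [Real.norm_eq_abs, abs_le]; exact ⟨by linarith [h1.1], h1.2⟩
  -- the covariance integrand
  set h : ℝ → ℝ := fun x => (A.indicator (fun _ => (1:ℝ)) x - α) * ((G x - G c) * phi x)
    with hh
  have hint : Integrable h := by
    refine hv.bdd_mul (c := 1 + α) ?_ (Filter.Eventually.of_forall fun x => ?_)
    · exact ((measurable_one.indicator hAm).sub measurable_const).aestronglyMeasurable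
    · have hind : 0 ≤ A.indicator (fun _ => (1:ℝ)) x ∧ A.indicator (fun _ => (1:ℝ)) x ≤ 1 := by
        rcases Set.indicator_eq_zero_or_self A (fun _ => (1:ℝ)) x with h0 | h0 <;> rw [h0] <;>
          norm_num
      rw [Real.norm_eq_abs, abs_le]
      exact ⟨by linarith [hind.1], by linarith [hind.2]⟩
  -- ∫ h = T - α²
  have hsplit : ∀ x, h x = A.indicator (fun x => (G x - G c) * phi x) x
      - α * ((G x - G c) * phi x) := by
    intro x
    simp only [hh]
    by_cases hx : x ∈ A
    · rw [Set.indicator_of_mem hx, Set.indicator_of_mem hx]; ring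
    · rw [Set.indicator_of_notMem hx, Set.indicator_of_notMem hx]; ring
  have hIndInt : Integrable (A.indicator fun x => (G x - G c) * phi x) :=
    hv.indicator hAm
  have hI1 : ∫ x, A.indicator (fun x => (G x - G c) * phi x) x = T - G c * α := by
    rw [integral_indicator hAm]
    have : ∫ x in A, (G x - G c) * phi x
        = (∫ x in A, G x * phi x) - ∫ x in A, G c * phi x := by
      rw [← integral_sub hGphi.integrableOn ((phi_integrable.const_mul (G c)).integrableOn)]
      exact setIntegral_congr_fun hAm fun x _ => by ring
    rw [this, integral_const_mul, hAphi]
    have hcomm : ∫ x in A, G x * phi x = T := by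
      rw [hT]
      exact setIntegral_congr_fun hAm fun x _ => mul_comm _ _
    rw [hcomm]
  have hI2 : ∫ x, (G x - G c) * phi x = α - G c := by
    have : ∫ x, (G x - G c) * phi x = (∫ x, G x * phi x) - ∫ x, G c * phi x := by
      rw [← integral_sub hGphi (phi_integrable.const_mul (G c))]
      exact integral_congr_ae (Filter.Eventually.of_forall fun x => by ring)
    rw [this, integral_const_mul, phi_integral, mul_one]
    have hcomm : ∫ x, G x * phi x = α := by
      rw [← hphiG]
      exact integral_congr_ae (Filter.Eventually.of_forall fun x => mul_comm _ _)
    rw [hcomm]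
  have hIh : ∫ x, h x = T - α ^ 2 := by
    rw [integral_congr_ae (Filter.Eventually.of_forall hsplit),
      integral_sub hIndInt (hv.const_mul α), hI1, integral_const_mul, hI2]
    ring
  -- h is nonneg
  have hnn : ∀ x, 0 ≤ h x := by
    intro x
    simp only [hh]
    by_cases hx : x ∈ A
    · rw [Set.indicator_of_mem hx]
      have hge : G c ≤ G x := (auxG_le hρ hc0).2 (le_of_lt hx)
      apply mul_nonneg (by linarith) (mul_nonneg (by linarith) (phi_pos x).le)
    · rw [Set.indicator_of_notMem hx]
      have hxc : |x| ≤ c := not_lt.1 hx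
      have hle : G x ≤ G c := (auxG_le hρ hc0).1 hxc
      have : (G x - G c) * phi x ≤ 0 :=
        mul_nonpos_iff.2 (Or.inr ⟨by linarith, (phi_pos x).le⟩)
      nlinarith
  -- h is positive on Ioi c
  have hpos : ∀ x, c < x → 0 < h x := by
    intro x hx
    have hxA : x ∈ A := by
      simp only [hA, Set.mem_setOf_eq]
      rw [abs_of_pos (lt_trans hc0 hx)]; exact hx
    simp only [hh]
    rw [Set.indicator_of_mem hxA]
    have hlt : G c < G x := auxG_strictMonoOn hρ hc0 c x hc0.le hx
    apply mul_pos (by linarith) (mul_pos (by linarith) (phi_pos x))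
  -- therefore ∫ h > 0
  have hpos2 : 0 < ∫ x, h x := by
    have hle : ∫ x in Set.Ioi c, h x ≤ ∫ x, h x :=
      setIntegral_le_integral hint (Filter.Eventually.of_forall hnn)
    have h1 : 0 < ∫ x in Set.Ioi c, h x := by
      rw [setIntegral_pos_iff_support_of_nonneg_ae
        (Filter.Eventually.of_forall fun x => hnn x : (0:ℝ→ℝ) ≤ᵐ[volume.restrict (Set.Ioi c)] h)
        hint.integrableOn]
      have hsub : Set.Ioi c ⊆ Function.support h ∩ Set.Ioi c := fun x hx =>
        ⟨Function.mem_support.2 (hpos x hx).ne', hx⟩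
      calc (0:ENNReal) < volume (Set.Ioi c) := by rw [Real.volume_Ioi]; exact ENNReal.zero_lt_top
        _ ≤ volume (Function.support h ∩ Set.Ioi c) := measure_mono hsub
    linarith
  rw [hIh] at hpos2
  linarith
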